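/- arXiv:1803.05702 — 3 statements merged into one kernel-verified Lean document; each statement's English description precedes it below -/
import Mathlib

section
/- Let f_1, ..., f_L : ℝ → ℝ be monotone non-decreasing functions such that f_1(x) ≤ f_2(x) ≤ ... ≤ f_L(x) for all x ∈ ℝ. Then for any values x_1 ≥ x_2 ≥ ... ≥ x_L, the maximum over all permutations π of {1,...,L} of min_{ℓ ∈ [L]} f_ℓ(x_{π(ℓ)}) is achieved by the identity permutation, i.e., max_π min_ℓ f_ℓ(x_{π(ℓ)}) = min_ℓ f_ℓ(x_ℓ). -/
/-- Max-min permutation theorem: for monotone non-decreasing, pointwise ordered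
functions `f 0 ≤ f 1 ≤ ... ≤ f (L-1)` and non-increasing inputs `x`, the maximum
over all permutations of the minimum of `f ℓ (x (π ℓ))` is achieved by the identity. -/
theorem stmt_0 (L : ℕ) (hL : 0 < L) (f : Fin L → ℝ → ℝ)
    (hmono : ∀ i, Monotone (f i))
    (hord : ∀ i j : Fin L, i ≤ j → ∀ x : ℝ, f i x ≤ f j x)
    (x : Fin L → ℝ) (hx : ∀ i j : Fin L, i ≤ j → x j ≤ x i) :
    (Finset.univ.sup' ⟨1, Finset.mem_univ 1⟩
        (fun π : Equiv.Perm (Fin L) =>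
          Finset.univ.inf' ⟨⟨0, hL⟩, Finset.mem_univ _⟩ (fun ℓ => f ℓ (x (π ℓ)))))
      = Finset.univ.inf' ⟨⟨0, hL⟩, Finset.mem_univ _⟩ (fun ℓ => f ℓ (x ℓ)) := by
  apply le_antisymm
  · apply Finset.sup'_le
    intro π _
    apply Finset.le_inf'
    intro m _
    -- pigeonhole: ∃ ℓ ≤ m with m ≤ π ℓ
    have hpig : ∃ ℓ : Fin L, ℓ ≤ m ∧ m ≤ π ℓ := by
      by_contra h
      push_neg at h
      have hmaps : ∀ a ∈ Finset.Iic m, π a ∈ Finset.Iio m := by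
        intro a ha
        simp only [Finset.mem_Iic] at ha
        simp only [Finset.mem_Iio]
        exact h a ha
      have hcard := Finset.card_le_card_of_injOn π hmaps
        (Set.injOn_of_injective π.injective)
      rw [Fin.card_Iic, Fin.card_Iio] at hcard
      omega
    obtain ⟨ℓ, hℓm, hmπ⟩ := hpig
    calc Finset.univ.inf' ⟨⟨0, hL⟩, Finset.mem_univ _⟩ (fun ℓ => f ℓ (x (π ℓ)))
        ≤ f ℓ (x (π ℓ)) := Finset.inf'_le _ (Finset.mem_univ ℓ)
      _ ≤ f m (x (π ℓ)) := hord ℓ m hℓm _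
      _ ≤ f m (x m) := (hmono m) (hx m (π ℓ) hmπ)
  · exact le_trans (le_of_eq (by simp)) (Finset.le_sup'
      (fun π : Equiv.Perm (Fin L) =>
        Finset.univ.inf' ⟨⟨0, hL⟩, Finset.mem_univ _⟩ (fun ℓ => f ℓ (x (π ℓ))))
      (Finset.mem_univ (1 : Equiv.Perm (Fin L))))
end

section
/- If f_1, ..., f_L : ℝ → ℝ are monotone non-decreasing with f_i ≤ f_{i'} pointwise for i ≤ i', and x_1 ≥ ... ≥ x_L, then for any permutation π and any pair i < i' with π(i) > π(i'), the permutation π' obtained from π by swapping the values at i and i' satisfies min_ℓ f_ℓ(x_{π'(ℓ)}) ≥ min_ℓ f_ℓ(x_{π(ℓ)}). -/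
/-- Minimum non-decreasing transposition lemma: swapping the values of a
permutation at an inversion pair does not decrease the minimum of
`f ℓ (x (π ℓ))`. -/
theorem stmt_2 (L : ℕ) (hL : 0 < L) (f : Fin L → ℝ → ℝ)
    (hmono : ∀ i, Monotone (f i))
    (hord : ∀ i j : Fin L, i ≤ j → ∀ x : ℝ, f i x ≤ f j x)
    (x : Fin L → ℝ) (hx : ∀ i j : Fin L, i ≤ j → x j ≤ x i)
    (π : Equiv.Perm (Fin L)) (i i' : Fin L) (hii' : i < i') (hinv : π i' < π i) :
    Finset.univ.inf' ⟨⟨0, hL⟩, Finset.mem_univ _⟩ (fun ℓ => f ℓ (x (π ℓ)))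
      ≤ Finset.univ.inf' ⟨⟨0, hL⟩, Finset.mem_univ _⟩
          (fun ℓ => f ℓ (x ((π * Equiv.swap i i') ℓ))) := by
  apply Finset.le_inf'
  intro ℓ _
  by_cases h1 : ℓ = i
  · subst h1
    have : (π * Equiv.swap ℓ i') ℓ = π i' := by simp [Equiv.swap_apply_left]
    rw [this]
    calc Finset.univ.inf' ⟨⟨0, hL⟩, Finset.mem_univ _⟩ (fun ℓ => f ℓ (x (π ℓ)))
        ≤ f ℓ (x (π ℓ)) := Finset.inf'_le _ (Finset.mem_univ _)
      _ ≤ f ℓ (x (π i')) := (hmono ℓ) (hx _ _ hinv.le)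
  by_cases h2 : ℓ = i'
  · subst h2
    have : (π * Equiv.swap i ℓ) ℓ = π i := by simp [Equiv.swap_apply_right]
    rw [this]
    calc Finset.univ.inf' ⟨⟨0, hL⟩, Finset.mem_univ _⟩ (fun ℓ => f ℓ (x (π ℓ)))
        ≤ f i (x (π i)) := Finset.inf'_le _ (Finset.mem_univ _)
      _ ≤ f ℓ (x (π i)) := hord _ _ hii'.le _
  · have : (π * Equiv.swap i i') ℓ = π ℓ := by
      simp [Equiv.swap_apply_of_ne_of_ne h1 h2]
    rw [this]
    exact Finset.inf'_le _ (Finset.mem_univ _)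
end

section
/- Let U ~ Gamma(L,1) and X ~ Gamma(M,1) be independent, and set W = ((η-2)/2)·X/U for η > 2. Then P(W ≤ γ) = 1 - Σ_{m=0}^{M-1} ((m+L-1)!/(m!(L-1)!)) · (2γ/(η-2))^m / (1 + 2γ/(η-2))^{m+L} for all γ ≥ 0. -/
open MeasureTheory


lemma negone_lt (k : ℕ) : (-1:ℝ) < (k:ℝ) :=
  lt_of_lt_of_le (by norm_num) (Nat.cast_nonneg k)

lemma aux_integrable (k : ℕ) {a : ℝ} (ha : 0 < a) :
    IntegrableOn (fun u : ℝ => u ^ k * Real.exp (-(a * u))) (Set.Ioi 0) := by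
  have h := integrableOn_rpow_mul_exp_neg_mul_rpow (s := (k : ℝ)) (p := 1)
    (negone_lt k) one_pos ha
  refine h.congr_fun (fun x hx => ?_) measurableSet_Ioi
  beta_reduce
  rw [Real.rpow_one, Real.rpow_natCast, neg_mul]

lemma aux_integral (k : ℕ) {a : ℝ} (ha : 0 < a) :
    ∫ u in Set.Ioi (0:ℝ), u ^ k * Real.exp (-(a * u)) = (Nat.factorial k) / a ^ (k + 1) := by
  have h := integral_rpow_mul_exp_neg_mul_rpow (p := 1) (q := (k : ℝ)) (b := a)
    one_pos (negone_lt k) ha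
  rw [show (∫ u in Set.Ioi (0:ℝ), u ^ k * Real.exp (-(a * u)))
      = ∫ x in Set.Ioi (0:ℝ), x ^ (k:ℝ) * Real.exp (-a * x ^ (1:ℝ)) from
    setIntegral_congr_fun measurableSet_Ioi (fun x hx => by
      rw [Real.rpow_one, Real.rpow_natCast, neg_mul]), h]
  rw [show ((k:ℝ) + 1) / 1 = ((k:ℝ) + 1) by ring, show (-((k:ℝ)+1))/1 = -((k:ℝ)+1) by ring,
    Real.Gamma_nat_eq_factorial, Real.rpow_neg ha.le,
    show ((k:ℝ) + 1) = ((k + 1 : ℕ) : ℝ) by push_cast; ring, Real.rpow_natCast]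
  field_simp

lemma incGamma (N : ℕ) (t : ℝ) :
    ∫ x in (0:ℝ)..t, x ^ N * Real.exp (-x)
      = (Nat.factorial N) * (1 - Real.exp (-t) * ∑ m ∈ Finset.range (N+1), t ^ m / (Nat.factorial m)) := by
  have key : ∀ s : ℝ, HasDerivAt
      (fun y : ℝ => -(Nat.factorial N : ℝ) *
        (Real.exp (-y) * ∑ m ∈ Finset.range (N+1), y ^ m / (Nat.factorial m)))
      (s ^ N * Real.exp (-s)) s := by
    intro s
    have hexp : HasDerivAt (fun y : ℝ => Real.exp (-y)) (-Real.exp (-s)) s := by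
      simpa using (hasDerivAt_neg s).exp
    have hsum : HasDerivAt (fun y : ℝ => ∑ m ∈ Finset.range (N+1), y ^ m / (Nat.factorial m))
        (∑ m ∈ Finset.range N, s ^ m / (Nat.factorial m)) s := by
      have h1 : HasDerivAt (fun y : ℝ => ∑ m ∈ Finset.range (N+1), y ^ m / (Nat.factorial m))
          (∑ m ∈ Finset.range (N+1), ((m : ℝ) * s ^ (m-1)) / (Nat.factorial m)) s := by
        apply HasDerivAt.fun_sum
        intro m _
        exact (hasDerivAt_pow m s).div_const _
      convert h1 using 1
      rw [Finset.sum_range_succ']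
      simp only [Nat.cast_zero, zero_mul, zero_div, add_zero]
      apply Finset.sum_congr rfl
      intro m _
      rw [Nat.add_sub_cancel, Nat.factorial_succ]
      have hm : (Nat.factorial m : ℝ) ≠ 0 := Nat.cast_ne_zero.mpr (Nat.factorial_ne_zero m)
      push_cast
      field_simp
    have h := (hexp.mul hsum).const_mul (-(Nat.factorial N : ℝ))
    refine h.congr_deriv ?_
    rw [Finset.sum_range_succ]
    have hN : (Nat.factorial N : ℝ) ≠ 0 := Nat.cast_ne_zero.mpr (Nat.factorial_ne_zero N)
    field_simp
    ring
  have hint : IntervalIntegrable (fun x : ℝ => x ^ N * Real.exp (-x)) volume 0 t :=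
    (Continuous.mul (continuous_pow N) (Real.continuous_exp.comp continuous_neg)).intervalIntegrable 0 t
  rw [intervalIntegral.integral_eq_sub_of_hasDerivAt (fun s _ => key s) hint]
  have h0 : ∑ m ∈ Finset.range (N+1), (0:ℝ) ^ m / (Nat.factorial m) = 1 := by
    rw [Finset.sum_range_succ']
    simp
  rw [h0]
  simp only [neg_zero, Real.exp_zero, mul_one, one_mul]
  ring

/-- Unconditional SIR CDF for the worst stream: with `U ~ Gamma(L,1)` and
`X ~ Gamma(M,1)` independent and `W = ((η-2)/2)·X/U`,
`P(W ≤ γ) = 1 - Σ_{m=0}^{M-1} ((m+L-1)!/(m!(L-1)!)) (2γ/(η-2))^m / (1+2γ/(η-2))^{m+L}`. -/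
theorem stmt_16 (L M : ℕ) (hL : 1 ≤ L) (hM : 1 ≤ M) (η γ : ℝ) (hη : 2 < η) (hγ : 0 ≤ γ) :
    (∫ u in Set.Ioi (0 : ℝ), ∫ x in Set.Ioi (0 : ℝ),
        (if ((η - 2) / 2) * x / u ≤ γ then
          (u ^ (L - 1) * Real.exp (-u) / (Nat.factorial (L - 1)))
            * (x ^ (M - 1) * Real.exp (-x) / (Nat.factorial (M - 1))) else 0))
      = 1 - ∑ m ∈ Finset.range M,
          ((Nat.factorial (m + L - 1) : ℝ) / (Nat.factorial m * Nat.factorial (L - 1)))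
            * (2 * γ / (η - 2)) ^ m / (1 + 2 * γ / (η - 2)) ^ (m + L) := by
  have h2 : (0:ℝ) < η - 2 := by linarith
  set c : ℝ := 2 * γ / (η - 2) with hc_def
  have hc : 0 ≤ c := by positivity
  have hc1 : (0:ℝ) < 1 + c := by linarith
  obtain ⟨N, rfl⟩ : ∃ N, M = N + 1 := ⟨M - 1, by omega⟩
  obtain ⟨K, rfl⟩ : ∃ K, L = K + 1 := ⟨L - 1, by omega⟩
  simp only [Nat.add_sub_cancel]
  have hKfac : (Nat.factorial K : ℝ) ≠ 0 := Nat.cast_ne_zero.mpr (Nat.factorial_ne_zero K)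
  have hNfac : (Nat.factorial N : ℝ) ≠ 0 := Nat.cast_ne_zero.mpr (Nat.factorial_ne_zero N)
  -- Step 1: inner integral
  have hinner : ∀ u ∈ Set.Ioi (0:ℝ),
      (∫ x in Set.Ioi (0:ℝ),
        (if ((η - 2) / 2) * x / u ≤ γ then
          (u ^ K * Real.exp (-u) / (Nat.factorial K))
            * (x ^ N * Real.exp (-x) / (Nat.factorial N)) else 0))
      = (u ^ K * Real.exp (-u) / (Nat.factorial K)) *
          (1 - Real.exp (-(c*u)) * ∑ m ∈ Finset.range (N+1), (c*u) ^ m / (Nat.factorial m)) := by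
    intro u hu
    have hu' : (0:ℝ) < u := hu
    have hcu : (0:ℝ) ≤ c * u := mul_nonneg hc hu'.le
    have hcond : ∀ x : ℝ, (((η - 2) / 2) * x / u ≤ γ) ↔ x ≤ c * u := by
      intro x
      rw [div_le_iff₀ hu', div_mul_eq_mul_div, div_le_iff₀ (by norm_num : (0:ℝ) < 2),
        hc_def, div_mul_eq_mul_div, le_div_iff₀ h2]
      constructor <;> intro h <;> nlinarith
    rw [show (∫ x in Set.Ioi (0:ℝ),
        (if ((η - 2) / 2) * x / u ≤ γ then
          (u ^ K * Real.exp (-u) / (Nat.factorial K))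
            * (x ^ N * Real.exp (-x) / (Nat.factorial N)) else 0))
      = ∫ x in Set.Ioi (0:ℝ), Set.indicator (Set.Iic (c*u))
          (fun x => (u ^ K * Real.exp (-u) / (Nat.factorial K))
            * (x ^ N * Real.exp (-x) / (Nat.factorial N))) x from
      setIntegral_congr_fun measurableSet_Ioi (fun x _ => by
        rw [Set.indicator_apply]
        exact if_congr (by simpa using hcond x) rfl rfl)]
    rw [setIntegral_indicator measurableSet_Iic, Set.Ioi_inter_Iic,
      ← intervalIntegral.integral_of_le hcu, intervalIntegral.integral_const_mul,
      intervalIntegral.integral_div, incGamma N (c*u)]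
    field_simp
  rw [setIntegral_congr_fun measurableSet_Ioi hinner]
  -- Step 2: pointwise expansion
  have hexpand : ∀ u : ℝ,
      (u ^ K * Real.exp (-u) / (Nat.factorial K)) *
          (1 - Real.exp (-(c*u)) * ∑ m ∈ Finset.range (N+1), (c*u) ^ m / (Nat.factorial m))
      = u ^ K * Real.exp (-(1*u)) / (Nat.factorial K)
        - ∑ m ∈ Finset.range (N+1),
            (c ^ m / ((Nat.factorial m : ℝ) * (Nat.factorial K)))
              * (u ^ (m+K) * Real.exp (-((1+c)*u))) := by
    intro u
    have he : Real.exp (-((1+c)*u)) = Real.exp (-u) * Real.exp (-(c*u)) := by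
      rw [← Real.exp_add]; ring_nf
    have he1 : Real.exp (-(1*u)) = Real.exp (-u) := by rw [one_mul]
    rw [mul_sub, mul_one, he1]
    congr 1
    rw [← mul_assoc, Finset.mul_sum]
    exact Finset.sum_congr rfl fun m _ => by rw [he]; ring
  rw [setIntegral_congr_fun measurableSet_Ioi (fun u _ => hexpand u)]
  -- Step 3: split
  have hfi : IntegrableOn (fun u : ℝ => u ^ K * Real.exp (-(1*u)) / (Nat.factorial K))
      (Set.Ioi 0) := (aux_integrable K one_pos).div_const _
  have hgi : ∀ m ∈ Finset.range (N+1), IntegrableOn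
      (fun u : ℝ => (c ^ m / ((Nat.factorial m : ℝ) * (Nat.factorial K)))
        * (u ^ (m+K) * Real.exp (-((1+c)*u)))) (Set.Ioi 0) :=
    fun m _ => (aux_integrable (m+K) hc1).const_mul _
  rw [integral_sub hfi (integrable_finset_sum _ hgi), integral_finset_sum _ hgi]
  simp only [integral_div, integral_const_mul]
  rw [aux_integral K one_pos]
  have hterm : ∀ m ∈ Finset.range (N+1),
      (c ^ m / ((Nat.factorial m : ℝ) * (Nat.factorial K)))
        * (∫ u in Set.Ioi (0:ℝ), u ^ (m+K) * Real.exp (-((1+c)*u)))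
      = ((Nat.factorial (m + (K+1) - 1) : ℝ) / (Nat.factorial m * Nat.factorial K))
          * c ^ m / (1 + c) ^ (m + (K+1)) := by
    intro m _
    rw [aux_integral (m+K) hc1, show m + (K+1) - 1 = m + K by omega,
      show m + (K+1) = (m+K) + 1 by omega]
    ring
  rw [Finset.sum_congr rfl hterm]
  rw [one_pow]
  field_simp
end
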